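/- In the ring R = ℚ[a, c][z]/(z² + c), for any integer N the element ∏_{k=0}^{3}(4a + (4N − 2k)z) · ∏_{k=0}^{5}(6a + (6N − 2k)z) has z-component (coefficient of z when written in the basis {1, z} over ℚ[a,c]) whose value at N = 2 is divisible in ℚ[a, c] by the homogeneous polynomial p₁(2, a, c) of degree 9, and the constant component (coefficient of 1) at N = 2 is divisible by p₂(2, a, c) of degree 10; moreover the ideal generated by the two components at N = 2 equals the ideal (p₁(2,a,c), p₂(2,a,c)). -/

import Mathlib

open MvPolynomial

noncomputable section

/-- The variable `a`, of weighted degree 1. -/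
def a : MvPolynomial (Fin 2) ℚ := X 0

/-- The variable `c`, of weighted degree 2. -/
def c : MvPolynomial (Fin 2) ℚ := X 1

/-- The ring `ℚ[a,c][z]`; the class `z` is `Polynomial.X`. -/
abbrev S : Type := Polynomial (MvPolynomial (Fin 2) ℚ)

/-- The ideal `(z² + c)`, so that `S ⧸ Irel` is `ℚ[a,c][z]/(z² + c)`. -/
def Irel : Ideal S := Ideal.span {Polynomial.X ^ 2 + Polynomial.C c}

/-- The product `∏_{k=0}^{3} (4a + (4N − 2k)z) · ∏_{k=0}^{5} (6a + (6N − 2k)z)`,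
computed in `ℚ[a,c][z]`. -/
def prodP (N : ℤ) : S :=
  (∏ k ∈ Finset.range 4,
    (Polynomial.C (4 * a) + Polynomial.C (C ((4 * N - 2 * (k : ℤ) : ℤ) : ℚ)) * Polynomial.X)) *
  (∏ k ∈ Finset.range 6,
    (Polynomial.C (6 * a) + Polynomial.C (C ((6 * N - 2 * (k : ℤ) : ℤ) : ℚ)) * Polynomial.X))

/-- The first relation polynomial `p₁(N, a, c)`. -/
def p1 (N : ℚ) : MvPolynomial (Fin 2) ℚ :=
  C (1620*N - 1296) * a^9
  + C (-19440*N^3 + 46656*N^2 - 35244*N + 8289) * a^7 * c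
  + C (40824*N^5 - 163296*N^4 + 246708*N^3 - 174069*N^2 + 56478*N - 6584) * a^5 * c^2
  + C (-19440*N^7 + 108864*N^6 - 246708*N^5 + 290115*N^4 - 188260*N^3 + 65840*N^2
      - 11038*N + 631) * a^3 * c^3
  + C (1620*N^9 - 11664*N^8 + 35244*N^7 - 58023*N^6 + 56478*N^5 - 32920*N^4
      + 11038*N^3 - 1893*N^2 + 120*N) * a * c^4

/-- The second relation polynomial `p₂(N, a, c)`. -/
def p2 (N : ℚ) : MvPolynomial (Fin 2) ℚ :=
  C 324 * a^10
  + C (-14580*N^2 + 23328*N - 8811) * a^8 * c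
  + C (68040*N^4 - 217728*N^3 + 246708*N^2 - 116046*N + 18826) * a^6 * c^2
  + C (-68040*N^6 + 326592*N^5 - 616770*N^4 + 580230*N^3 - 282390*N^2 + 65840*N
      - 5519) * a^4 * c^3
  + C (14580*N^8 - 93312*N^7 + 246708*N^6 - 348138*N^5 + 282390*N^4 - 131680*N^3
      + 33114*N^2 - 3786*N + 120) * a^2 * c^4
  + C (-324*N^10 + 2592*N^9 - 8811*N^8 + 16578*N^7 - 18826*N^6 + 13168*N^5
      - 5519*N^4 + 1262*N^3 - 120*N^2) * c^5

end

noncomputable section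

/-- Auxiliary quotient polynomial for the division of `prodP 2` by `z² + c`. -/
def Qaux : S :=
  (754790400 : S) * Polynomial.C a ^ 8
    + (2292572160 : S) * Polynomial.C a ^ 7 * Polynomial.X
    - (4437762048 : S) * Polynomial.C a ^ 6 * Polynomial.C c
    + (4437762048 : S) * Polynomial.C a ^ 6 * Polynomial.X ^ 2
    - (5705957376 : S) * Polynomial.C a ^ 5 * Polynomial.C c * Polynomial.X
    + (5705957376 : S) * Polynomial.C a ^ 5 * Polynomial.X ^ 3
    + (4921159680 : S) * Polynomial.C a ^ 4 * Polynomial.C c ^ 2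
    - (4921159680 : S) * Polynomial.C a ^ 4 * Polynomial.C c * Polynomial.X ^ 2
    + (4921159680 : S) * Polynomial.C a ^ 4 * Polynomial.X ^ 4
    + (2802032640 : S) * Polynomial.C a ^ 3 * Polynomial.C c ^ 2 * Polynomial.X
    - (2802032640 : S) * Polynomial.C a ^ 3 * Polynomial.C c * Polynomial.X ^ 3
    + (2802032640 : S) * Polynomial.C a ^ 3 * Polynomial.X ^ 5
    - (1004322816 : S) * Polynomial.C a ^ 2 * Polynomial.C c ^ 3
    + (1004322816 : S) * Polynomial.C a ^ 2 * Polynomial.C c ^ 2 * Polynomial.X ^ 2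
    - (1004322816 : S) * Polynomial.C a ^ 2 * Polynomial.C c * Polynomial.X ^ 4
    + (1004322816 : S) * Polynomial.C a ^ 2 * Polynomial.X ^ 6
    - (203784192 : S) * Polynomial.C a * Polynomial.C c ^ 3 * Polynomial.X
    + (203784192 : S) * Polynomial.C a * Polynomial.C c ^ 2 * Polynomial.X ^ 3
    - (203784192 : S) * Polynomial.C a * Polynomial.C c * Polynomial.X ^ 5
    + (203784192 : S) * Polynomial.C a * Polynomial.X ^ 7
    + (17694720 : S) * Polynomial.C c ^ 4
    - (17694720 : S) * Polynomial.C c ^ 3 * Polynomial.X ^ 2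
    + (17694720 : S) * Polynomial.C c ^ 2 * Polynomial.X ^ 4
    - (17694720 : S) * Polynomial.C c * Polynomial.X ^ 6
    + (17694720 : S) * Polynomial.X ^ 8

set_option maxHeartbeats 4000000 in
lemma key : prodP 2 = (Polynomial.X ^ 2 + Polynomial.C c) * Qaux
    + Polynomial.C (36864 * p2 2) + Polynomial.C (73728 * p1 2) * Polynomial.X := by
  simp only [prodP, p1, p2, Finset.prod_range_succ, Finset.prod_range_zero,
    map_add, map_mul, map_pow, map_sub, map_neg, map_one, map_ofNat]
  rw [Qaux]
  norm_num
  simp only [map_ofNat]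
  ring

lemma mem_key : prodP 2 - (Polynomial.C (36864 * p2 2)
    + Polynomial.C (73728 * p1 2) * Polynomial.X) ∈ Irel := by
  rw [key, Irel]
  exact Ideal.mem_span_singleton.2 ⟨Qaux, by ring⟩

end

/-- If the image of the product `P₂` in `R = ℚ[a,c][z]/(z² + c)` is written as
`q₀ + q₁·z` in the basis `{1, z}` over `ℚ[a,c]`, then the `z`-component `q₁` is divisible
by `p₁(2,a,c)`, the constant component `q₀` is divisible by `p₂(2,a,c)`, and the ideal
`(q₀, q₁)` equals the ideal `(p₁(2,a,c), p₂(2,a,c))`. -/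


theorem stmt_13 (q₀ q₁ : MvPolynomial (Fin 2) ℚ)
    (h : Ideal.Quotient.mk Irel (prodP 2) =
      Ideal.Quotient.mk Irel (Polynomial.C q₀ + Polynomial.C q₁ * Polynomial.X)) :
    p1 2 ∣ q₁ ∧ p2 2 ∣ q₀ ∧
      Ideal.span {q₀, q₁} = Ideal.span {p1 2, p2 2} := by
  have h2 : (Polynomial.C q₀ + Polynomial.C q₁ * Polynomial.X)
      - (Polynomial.C (36864 * p2 2) + Polynomial.C (73728 * p1 2) * Polynomial.X) ∈ Irel := by
    have := Irel.sub_mem mem_key (Ideal.Quotient.eq.mp h)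
    simpa using this
  have hdvd : (Polynomial.X ^ 2 + Polynomial.C c) ∣
      (Polynomial.C (q₀ - 36864 * p2 2) + Polynomial.C (q₁ - 73728 * p1 2) * Polynomial.X) := by
    have := Ideal.mem_span_singleton.1 h2
    convert this using 1
    simp only [map_sub]
    ring
  have hdegD : (Polynomial.X ^ 2 + Polynomial.C c : S).degree = 2 :=
    Polynomial.degree_X_pow_add_C (by norm_num) c
  have hdeg : (Polynomial.C (q₀ - 36864 * p2 2)
      + Polynomial.C (q₁ - 73728 * p1 2) * Polynomial.X : S).degree < 2 := by
    apply lt_of_le_of_lt (Polynomial.degree_add_le _ _)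
    apply max_lt
    · exact lt_of_le_of_lt Polynomial.degree_C_le (by norm_num)
    · exact lt_of_le_of_lt (Polynomial.degree_C_mul_X_le _) (by norm_num)
  have hzero : (Polynomial.C (q₀ - 36864 * p2 2)
      + Polynomial.C (q₁ - 73728 * p1 2) * Polynomial.X : S) = 0 := by
    exact Polynomial.eq_zero_of_dvd_of_degree_lt hdvd (hdegD ▸ hdeg)
  have h0 : q₀ = 36864 * p2 2 := by
    have := congrArg (fun p => Polynomial.coeff p 0) hzero
    simpa [sub_eq_zero] using this
  have h1 : q₁ = 73728 * p1 2 := by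
    have := congrArg (fun p => Polynomial.coeff p 1) hzero
    simpa [sub_eq_zero] using this
  subst h0 h1
  have u1 : IsUnit (73728 : MvPolynomial (Fin 2) ℚ) := by
    refine IsUnit.of_mul_eq_one (MvPolynomial.C (73728 : ℚ)⁻¹) ?_
    rw [(map_ofNat (MvPolynomial.C : ℚ →+* MvPolynomial (Fin 2) ℚ) 73728).symm, ← map_mul]
    norm_num
  have u2 : IsUnit (36864 : MvPolynomial (Fin 2) ℚ) := by
    refine IsUnit.of_mul_eq_one (MvPolynomial.C (36864 : ℚ)⁻¹) ?_
    rw [(map_ofNat (MvPolynomial.C : ℚ →+* MvPolynomial (Fin 2) ℚ) 36864).symm, ← map_mul]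
    norm_num
  refine ⟨dvd_mul_left _ _, dvd_mul_left _ _, ?_⟩
  rw [Ideal.span_insert, Ideal.span_insert,
    Ideal.span_singleton_mul_left_unit u2, Ideal.span_singleton_mul_left_unit u1,
    sup_comm]
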